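/- For the anchored linear-regression MAP map θ* (θ₀) = (XᵀX + σ_ε²Σ_prior⁻¹)⁻¹(Xᵀy + σ_ε²Σ_prior⁻¹θ₀), if θ₀ ~ N(μ_prior, Σ_prior), then Var[θ*(θ₀)] = σ_ε⁴ M Σ_prior⁻¹ Mᵀ where M = (XᵀX + σ_ε²Σ_prior⁻¹)⁻¹, and this equals Σ_post² Σ_prior⁻¹ where Σ_post = σ_ε² M is the true posterior covariance (assuming all the matrices are symmetric). -/

import Mathlib

open Matrix MeasureTheory ProbabilityTheory

/-- A random vector is Gaussian with mean `m` and covariance `S` iff every linear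
functional of it is a real Gaussian with the corresponding mean and variance. -/
def IsGaussianVec {Ω : Type*} [MeasureSpace Ω] {d : ℕ} (X : Ω → Fin d → ℝ)
    (m : Fin d → ℝ) (S : Matrix (Fin d) (Fin d) ℝ) : Prop :=
  ∀ t : Fin d → ℝ,
    Measure.map (fun ω => t ⬝ᵥ X ω) ℙ =
      gaussianReal (t ⬝ᵥ m) (t ⬝ᵥ S.mulVec t).toNNReal

open Real


lemma integral_sq_exp {b : ℝ} (hb : 0 < b) :
    ∫ x : ℝ, x ^ 2 * Real.exp (-b * x ^ 2)
      = b ^ (-(3:ℝ)/2) * Real.sqrt π / 2 := by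
  have key : (∫ x : ℝ, (fun u : ℝ => u ^ 2 * Real.exp (-b * u ^ 2)) |x|)
      = 2 * ∫ x in Set.Ioi (0:ℝ), (fun u : ℝ => u ^ 2 * Real.exp (-b * u ^ 2)) x :=
    by exact integral_comp_abs (f := fun u : ℝ => u ^ 2 * Real.exp (-b * u ^ 2))
  simp only [sq_abs] at key
  rw [key]
  have h2 : (∫ x in Set.Ioi (0:ℝ), x ^ 2 * Real.exp (-b * x ^ 2))
      = ∫ x in Set.Ioi (0:ℝ), x ^ (2:ℝ) * Real.exp (-b * x ^ (2:ℝ)) := by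
    refine setIntegral_congr_fun measurableSet_Ioi (fun x hx => ?_)
    rw [show (2:ℝ) = ((2:ℕ):ℝ) by norm_num, Real.rpow_natCast]
  rw [h2, integral_rpow_mul_exp_neg_mul_rpow (by norm_num) (by norm_num) hb,
    show ((2:ℝ)+1)/2 = 1/2 + 1 by norm_num,
    Real.Gamma_add_one (by norm_num), Real.Gamma_one_half_eq]
  ring_nf

lemma integrable_sq_gaussian (m : ℝ) (v : NNReal) :
    Integrable (fun x => (x - m) ^ 2) (gaussianReal m v) := by
  by_cases hv : v = 0
  · subst hv
    rw [gaussianReal_zero_var]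
    refine (integrable_congr ?_).mpr (integrable_zero ℝ ℝ _)
    have : ∀ᵐ x ∂(MeasureTheory.Measure.dirac m), (x - m) ^ 2 = (0:ℝ) := by
      refine (ae_dirac_iff ?_).mpr (by simp)
      exact ((measurable_id'.sub_const m).pow_const 2) (measurableSet_singleton 0)
    exact this
  · rw [gaussianReal_of_var_ne_zero _ hv]
    have hmeas : Measurable fun x => (gaussianPDFReal m v x).toNNReal :=
      (measurable_gaussianPDFReal m v).real_toNNReal
    have hd : gaussianPDF m v = fun x => ((gaussianPDFReal m v x).toNNReal : ENNReal) := rfl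
    rw [hd, integrable_withDensity_iff_integrable_smul hmeas]
    have hb : (0:ℝ) < (2 * v : ℝ)⁻¹ := by positivity
    have base : Integrable (fun x : ℝ => x ^ 2 * Real.exp (-(2 * (v:ℝ))⁻¹ * x ^ 2)) := by
      have := integrable_rpow_mul_exp_neg_mul_sq hb (s := 2) (by norm_num)
      simpa [Real.rpow_two] using this
    have base2 := (base.comp_sub_right m).const_mul (√(2 * π * v))⁻¹
    refine base2.congr (Filter.Eventually.of_forall fun x => ?_)
    have h0 : 0 ≤ gaussianPDFReal m v x := gaussianPDFReal_nonneg m v x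
    show _ = (gaussianPDFReal m v x).toNNReal • (x - m) ^ 2
    rw [NNReal.smul_def, smul_eq_mul, Real.coe_toNNReal _ h0]
    simp only [gaussianPDFReal]
    rw [show -(x - m) ^ 2 / (2 * (v:ℝ)) = -(2 * (v:ℝ))⁻¹ * (x - m) ^ 2 by ring]
    ring

lemma integral_sq_gaussian (m : ℝ) (v : NNReal) :
    ∫ x, (x - m) ^ 2 ∂(gaussianReal m v) = v := by
  by_cases hv : v = 0
  · subst hv
    rw [gaussianReal_zero_var, integral_dirac]
    simp
  · rw [gaussianReal_of_var_ne_zero _ hv]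
    have hmeas : Measurable fun x => (gaussianPDFReal m v x).toNNReal :=
      (measurable_gaussianPDFReal m v).real_toNNReal
    have hd : gaussianPDF m v = fun x => ((gaussianPDFReal m v x).toNNReal : ENNReal) := rfl
    rw [hd, integral_withDensity_eq_integral_smul hmeas]
    have hveq : ∀ x : ℝ, (gaussianPDFReal m v x).toNNReal • (x - m) ^ 2
        = (√(2 * π * v))⁻¹ * ((x - m) ^ 2 * Real.exp (-(2 * (v:ℝ))⁻¹ * (x - m) ^ 2)) := by
      intro x
      have h0 : 0 ≤ gaussianPDFReal m v x := gaussianPDFReal_nonneg m v x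
      rw [NNReal.smul_def, smul_eq_mul, Real.coe_toNNReal _ h0]
      simp only [gaussianPDFReal]
      rw [show -(x - m) ^ 2 / (2 * (v:ℝ)) = -(2 * (v:ℝ))⁻¹ * (x - m) ^ 2 by ring]
      ring
    simp only [hveq]
    rw [integral_const_mul]
    have hb : (0:ℝ) < (2 * v : ℝ)⁻¹ := by positivity
    have hshift : (∫ x : ℝ, (x - m) ^ 2 * Real.exp (-(2 * (v:ℝ))⁻¹ * (x - m) ^ 2))
        = ∫ x : ℝ, x ^ 2 * Real.exp (-(2 * (v:ℝ))⁻¹ * x ^ 2) := by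
      exact integral_sub_right_eq_self (fun u : ℝ => u ^ 2 * Real.exp (-(2 * (v:ℝ))⁻¹ * u ^ 2)) m
    rw [hshift, integral_sq_exp hb]
    -- now pure computation
    have hvpos : (0:ℝ) < v := by positivity
    have hw : (0:ℝ) < 2 * v := by positivity
    have h1 : ((2 * (v:ℝ))⁻¹) ^ (-(3:ℝ)/2) = (2 * (v:ℝ)) ^ ((3:ℝ)/2) := by
      rw [Real.inv_rpow hw.le, ← Real.rpow_neg hw.le]
      norm_num
    have h2 : (2 * (v:ℝ)) ^ ((3:ℝ)/2) = (2 * v) * Real.sqrt (2 * v) := by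
      rw [show (3:ℝ)/2 = 1 + 1/2 by norm_num, Real.rpow_add hw, Real.rpow_one,
        ← Real.sqrt_eq_rpow]
    have h3 : Real.sqrt (2 * π * v) = Real.sqrt π * Real.sqrt (2 * v) := by
      rw [← Real.sqrt_mul pi_pos.le]; ring_nf
    rw [h1, h2, h3]
    have hs2v : Real.sqrt (2 * v) * Real.sqrt (2 * v) = 2 * v :=
      Real.mul_self_sqrt hw.le
    have hsp : (0:ℝ) < Real.sqrt π := Real.sqrt_pos.mpr pi_pos
    have hs2vpos : (0:ℝ) < Real.sqrt (2 * v) := Real.sqrt_pos.mpr hw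
    field_simp

section transfer

variable {Ω : Type*} [MeasureSpace Ω] [IsProbabilityMeasure (ℙ : Measure Ω)] {d : ℕ}
  {θ₀ : Ω → Fin d → ℝ} {μ : Fin d → ℝ} {S : Matrix (Fin d) (Fin d) ℝ}

lemma measurable_dot (hmeas : Measurable θ₀) (t : Fin d → ℝ) :
    Measurable (fun ω => t ⬝ᵥ θ₀ ω) := by
  simp only [dotProduct]
  exact Finset.measurable_sum _ fun i _ =>
    measurable_const.mul ((measurable_pi_apply i).comp hmeas)

lemma sq_moment (hmeas : Measurable θ₀) (hS : ∀ u : Fin d → ℝ, 0 ≤ u ⬝ᵥ S.mulVec u)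
    (hGauss : IsGaussianVec θ₀ μ S) (t : Fin d → ℝ) :
    Integrable (fun ω => (t ⬝ᵥ θ₀ ω - t ⬝ᵥ μ) ^ 2) ℙ ∧
      ∫ ω, (t ⬝ᵥ θ₀ ω - t ⬝ᵥ μ) ^ 2 = t ⬝ᵥ S.mulVec t := by
  have hT : Measurable (fun ω => t ⬝ᵥ θ₀ ω) := measurable_dot hmeas t
  have hg : Measurable (fun x : ℝ => (x - t ⬝ᵥ μ) ^ 2) :=
    (measurable_id'.sub_const _).pow_const 2
  have hmap := hGauss t
  constructor
  · have := integrable_sq_gaussian (t ⬝ᵥ μ) (t ⬝ᵥ S.mulVec t).toNNReal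
    rw [← hmap] at this
    exact (integrable_map_measure hg.aestronglyMeasurable hT.aemeasurable).mp this
  · have h1 : ∫ ω, (t ⬝ᵥ θ₀ ω - t ⬝ᵥ μ) ^ 2
        = ∫ x, (x - t ⬝ᵥ μ) ^ 2 ∂(Measure.map (fun ω => t ⬝ᵥ θ₀ ω) ℙ) :=
      (integral_map hT.aemeasurable hg.aestronglyMeasurable).symm
    rw [h1, hmap, integral_sq_gaussian, Real.coe_toNNReal _ (hS t)]

lemma cov_moment (hmeas : Measurable θ₀) (hS : ∀ u : Fin d → ℝ, 0 ≤ u ⬝ᵥ S.mulVec u)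
    (hSsymm : Sᵀ = S) (hGauss : IsGaussianVec θ₀ μ S) (t s : Fin d → ℝ) :
    ∫ ω, (t ⬝ᵥ θ₀ ω - t ⬝ᵥ μ) * (s ⬝ᵥ θ₀ ω - s ⬝ᵥ μ) = t ⬝ᵥ S.mulVec s := by
  obtain ⟨hit, hvt⟩ := sq_moment hmeas hS hGauss t
  obtain ⟨his, hvs⟩ := sq_moment hmeas hS hGauss s
  obtain ⟨hits, hvts⟩ := sq_moment hmeas hS hGauss (t + s)
  have hptwise : (fun ω => (t ⬝ᵥ θ₀ ω - t ⬝ᵥ μ) * (s ⬝ᵥ θ₀ ω - s ⬝ᵥ μ))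
      = fun ω => (((t + s) ⬝ᵥ θ₀ ω - (t + s) ⬝ᵥ μ) ^ 2
          - (t ⬝ᵥ θ₀ ω - t ⬝ᵥ μ) ^ 2 - (s ⬝ᵥ θ₀ ω - s ⬝ᵥ μ) ^ 2) / 2 := by
    funext ω
    simp only [add_dotProduct]
    ring
  rw [hptwise]
  have hits' : Integrable (fun ω => (((t + s) ⬝ᵥ θ₀ ω - (t + s) ⬝ᵥ μ) ^ 2
      - (t ⬝ᵥ θ₀ ω - t ⬝ᵥ μ) ^ 2)) ℙ := hits.sub hit
  rw [integral_div, integral_sub hits' his, integral_sub hits hit,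
    hvt, hvs, hvts]
  have hcomm : s ⬝ᵥ S.mulVec t = t ⬝ᵥ S.mulVec s := by
    rw [dotProduct_mulVec, ← mulVec_transpose, hSsymm, dotProduct_comm]
  rw [add_dotProduct, mulVec_add, dotProduct_add, dotProduct_add, hcomm]
  ring

end transfer


/-- For the anchored linear-regression MAP map
`θ*(θ₀) = (XᵀX + σ_ε²Σ_prior⁻¹)⁻¹(Xᵀy + σ_ε²Σ_prior⁻¹θ₀)` with
`θ₀ ~ N(μ_prior, Σ_prior)`, the covariance of `θ*(θ₀)` is
`σ_ε⁴ M Σ_prior⁻¹ Mᵀ` with `M = (XᵀX + σ_ε²Σ_prior⁻¹)⁻¹`, which equals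
`Σ_post² Σ_prior⁻¹` for `Σ_post = σ_ε² M` (assuming the matrices are symmetric). -/
theorem stmt_13 {Ω : Type*} [MeasureSpace Ω] [IsProbabilityMeasure (ℙ : Measure Ω)]
    {N d : ℕ} (X : Matrix (Fin N) (Fin d) ℝ) (y : Fin N → ℝ)
    (se2 : ℝ) (hse2 : 0 < se2) (Sprior : Matrix (Fin d) (Fin d) ℝ)
    (hprior : Sprior.PosDef) (μprior : Fin d → ℝ)
    (θ₀ : Ω → Fin d → ℝ) (hmeas : Measurable θ₀)
    (hGauss : IsGaussianVec θ₀ μprior Sprior)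
    (M : Matrix (Fin d) (Fin d) ℝ) (hM : M = (Xᵀ * X + se2 • Sprior⁻¹)⁻¹)
    (f : (Fin d → ℝ) → Fin d → ℝ)
    (hf : ∀ θ, f θ = M.mulVec (Xᵀ.mulVec y + se2 • Sprior⁻¹.mulVec θ))
    (hsymm : (M * Sprior⁻¹)ᵀ = M * Sprior⁻¹) :
    (∀ i j, (∫ ω, (f (θ₀ ω) i - f μprior i) * (f (θ₀ ω) j - f μprior j)) =
        (se2 ^ 2 • (M * Sprior⁻¹ * Mᵀ)) i j) ∧
      se2 ^ 2 • (M * Sprior⁻¹ * Mᵀ) = (se2 • M) ^ 2 * Sprior⁻¹ := by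
  have hSsymm : Spriorᵀ = Sprior := by
    have := hprior.1
    simpa [Matrix.IsHermitian, Matrix.conjTranspose_eq_transpose_of_trivial] using this
  have hSinvsymm : (Sprior⁻¹)ᵀ = Sprior⁻¹ := by
    rw [Matrix.transpose_nonsing_inv, hSsymm]
  have hdet : IsUnit Sprior.det := hprior.det_pos.ne'.isUnit
  have hinvmul : Sprior⁻¹ * Sprior = 1 := Matrix.nonsing_inv_mul Sprior hdet
  have hS : ∀ u : Fin d → ℝ, 0 ≤ u ⬝ᵥ Sprior.mulVec u := by
    intro u
    have := hprior.posSemidef.dotProduct_mulVec_nonneg u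
    simpa using this
  set A : Matrix (Fin d) (Fin d) ℝ := se2 • (M * Sprior⁻¹) with hA
  have hfd : ∀ θ, f θ = M.mulVec (Xᵀ.mulVec y) + A.mulVec θ := by
    intro θ
    rw [hf, Matrix.mulVec_add, Matrix.mulVec_smul, hA, Matrix.smul_mulVec,
      Matrix.mulVec_mulVec, Matrix.mulVec_mulVec]
  have hdiff : ∀ θ i, f θ i - f μprior i = A i ⬝ᵥ θ - A i ⬝ᵥ μprior := by
    intro θ i
    rw [hfd θ, hfd μprior]
    show _ + A.mulVec θ i - (_ + A.mulVec μprior i) = A.mulVec θ i - A.mulVec μprior i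
    ring
  have hprod : M * Sprior⁻¹ * Sprior * (Sprior⁻¹ * Mᵀ) = M * Sprior⁻¹ * Mᵀ := by
    calc M * Sprior⁻¹ * Sprior * (Sprior⁻¹ * Mᵀ)
        = M * (Sprior⁻¹ * Sprior) * (Sprior⁻¹ * Mᵀ) := by rw [Matrix.mul_assoc M]
      _ = M * (Sprior⁻¹ * Mᵀ) := by rw [hinvmul, Matrix.mul_one]
      _ = M * Sprior⁻¹ * Mᵀ := by rw [Matrix.mul_assoc]
  have hASA : A * Sprior * Aᵀ = se2 ^ 2 • (M * Sprior⁻¹ * Mᵀ) := by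
    rw [hA, Matrix.transpose_smul, Matrix.transpose_mul, hSinvsymm,
      Matrix.smul_mul, Matrix.smul_mul, Matrix.mul_smul, smul_smul, ← pow_two, hprod]
  have hentry : ∀ i j : Fin d, A i ⬝ᵥ Sprior.mulVec (A j) = (A * Sprior * Aᵀ) i j := by
    intro i j
    simp only [Matrix.mul_apply, dotProduct, Matrix.mulVec, Matrix.transpose_apply,
      Finset.sum_mul, Finset.mul_sum]
    rw [Finset.sum_comm]
    refine Finset.sum_congr rfl fun k _ => Finset.sum_congr rfl fun l _ => by ring
  constructor
  · intro i j
    have h1 : (∫ ω, (f (θ₀ ω) i - f μprior i) * (f (θ₀ ω) j - f μprior j))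
        = ∫ ω, (A i ⬝ᵥ θ₀ ω - A i ⬝ᵥ μprior) * (A j ⬝ᵥ θ₀ ω - A j ⬝ᵥ μprior) := by
      congr 1
      funext ω
      rw [hdiff, hdiff]
    rw [h1, cov_moment hmeas hS hSsymm hGauss (A i) (A j), hentry, hASA]
  · have hMM : M * Sprior⁻¹ * Mᵀ = M * M * Sprior⁻¹ := by
      have h2 : Sprior⁻¹ * Mᵀ = M * Sprior⁻¹ := by
        rw [← hsymm, Matrix.transpose_mul, hSinvsymm]
      calc M * Sprior⁻¹ * Mᵀ = M * (Sprior⁻¹ * Mᵀ) := by rw [Matrix.mul_assoc]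
        _ = M * (M * Sprior⁻¹) := by rw [h2]
        _ = M * M * Sprior⁻¹ := by rw [Matrix.mul_assoc]
    rw [hMM]
    have hsq : (se2 • M) ^ 2 = se2 ^ 2 • (M * M) := by
      rw [pow_two, pow_two, Matrix.smul_mul, Matrix.mul_smul, smul_smul]
    rw [hsq, Matrix.smul_mul]
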